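/- Let f_1, …, f_s ∈ 𝕋[x_1,…,x_n] be nonconstant polynomials (none is of the form C c for c ∈ 𝕋). Then their common tropical zero set is nonempty: there exists a ∈ 𝕋^n with f_i(a) ∈ 𝕌̄ for every i = 1, …, s. -/

import Mathlib

/-- The extended tropical semiring `𝕋`: tangible reals `(a, false)`,
ghost reals `(a, true)`, and `none` = `-∞`. -/
def T : Type := Option (ℝ × Bool)

namespace T

/-- The tangible element of value `a`. -/
def tang (a : ℝ) : T := some (a, false)

/-- The ghost element `a^ν` of value `a`. -/
def ghost (a : ℝ) : T := some (a, true)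

/-- Tropical addition on `𝕋`. -/
noncomputable def add : T → T → T
  | none, y => y
  | some p, none => some p
  | some (a, s), some (b, t) =>
      if a < b then some (b, t) else if b < a then some (a, s) else some (a, true)

/-- Tropical multiplication on `𝕋`. -/
noncomputable def mul : T → T → T
  | none, _ => none
  | some _, none => none
  | some (a, s), some (b, t) => some (a + b, s || t)

lemma add_assoc' : ∀ x y z : T, add (add x y) z = add x (add y z) := by
  show ∀ x y z : Option (ℝ × Bool), @Eq (Option (ℝ × Bool)) (add (add x y) z) (add x (add y z))
  rintro (_ | ⟨a, s⟩) (_ | ⟨b, t⟩) (_ | ⟨c, u⟩) <;>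
    simp only [add] <;>
    (try delta T) <;>
    (try split_ifs) <;>
    (try simp only [add]) <;>
    (try split_ifs) <;>
    first
      | rfl
      | (exfalso; linarith)
      | (refine congrArg some ?_; refine Prod.ext ?_ ?_ <;>
          first | rfl | linarith | simp)

lemma add_comm' : ∀ x y : T, add x y = add y x := by
  show ∀ x y : Option (ℝ × Bool), @Eq (Option (ℝ × Bool)) (add x y) (add y x)
  rintro (_ | ⟨a, s⟩) (_ | ⟨b, t⟩) <;>
    simp only [add] <;>
    (try delta T) <;>
    (try split_ifs) <;>
    first
      | rfl
      | (exfalso; linarith)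
      | (refine congrArg some ?_; refine Prod.ext ?_ ?_ <;>
          first | rfl | linarith | simp)

lemma mul_assoc' : ∀ x y z : T, mul (mul x y) z = mul x (mul y z) := by
  show ∀ x y z : Option (ℝ × Bool), @Eq (Option (ℝ × Bool)) (mul (mul x y) z) (mul x (mul y z))
  rintro (_ | ⟨a, s⟩) (_ | ⟨b, t⟩) (_ | ⟨c, u⟩) <;>
    simp [mul, add_assoc, Bool.or_assoc]

lemma mul_comm' : ∀ x y : T, mul x y = mul y x := by
  show ∀ x y : Option (ℝ × Bool), @Eq (Option (ℝ × Bool)) (mul x y) (mul y x)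
  rintro (_ | ⟨a, s⟩) (_ | ⟨b, t⟩) <;> simp [mul, add_comm, Bool.or_comm]

lemma left_distrib' : ∀ x y z : T, mul x (add y z) = add (mul x y) (mul x z) := by
  show ∀ x y z : Option (ℝ × Bool), @Eq (Option (ℝ × Bool)) (mul x (add y z)) (add (mul x y) (mul x z))
  rintro (_ | ⟨a, s⟩) (_ | ⟨b, t⟩) (_ | ⟨c, u⟩) <;>
    simp only [add, mul] <;>
    (try delta T) <;>
    (try split_ifs) <;>
    (try simp only [add, mul]) <;>
    (try split_ifs) <;>
    first
      | rfl
      | (exfalso; linarith)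
      | (refine congrArg some ?_; refine Prod.ext ?_ ?_ <;>
          first | rfl | linarith | simp)

noncomputable instance : Zero T := ⟨none⟩
noncomputable instance : One T := ⟨some (0, false)⟩
noncomputable instance : Add T := ⟨add⟩
noncomputable instance : Mul T := ⟨mul⟩

noncomputable instance : CommSemiring T where
  add := (· + ·)
  zero := 0
  add_assoc := add_assoc'
  zero_add := fun x => by cases x <;> rfl
  add_zero := fun x => by cases x <;> rfl
  add_comm := add_comm'
  mul := (· * ·)
  one := 1
  mul_assoc := mul_assoc'
  one_mul := fun x => by
    show @Eq (Option (ℝ × Bool)) (mul (some (0, false)) x) (x)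
    rcases x with _ | ⟨a, s⟩ <;> simp [mul]
  mul_one := fun x => by
    show @Eq (Option (ℝ × Bool)) (mul x (some (0, false))) (x)
    rcases x with _ | ⟨a, s⟩ <;> simp [mul]
  mul_comm := mul_comm'
  zero_mul := fun x => by cases x <;> rfl
  mul_zero := fun x => by cases x <;> rfl
  left_distrib := left_distrib'
  right_distrib := fun x y z => by
    show mul (add x y) z = add (mul x z) (mul y z)
    rw [mul_comm', left_distrib', mul_comm' z x, mul_comm' z y]
  nsmul := nsmulRec

/-- Membership in the ghost part `𝕌̄ = 𝕌 ∪ {-∞}` of `𝕋`. -/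
def isGhost : T → Prop
  | none => True
  | some (_, s) => s = true

/-- Membership in the tangible part `ℝ ∪ {-∞}` of `𝕋`. -/
def isTangible : T → Prop
  | none => True
  | some (_, s) => s = false

/-- The underlying real value (junk value `0` at `-∞`); this is `π` on elements `≠ -∞`. -/
def val : T → ℝ
  | none => 0
  | some (a, _) => a

/-- The ghost map `ν`. -/
def nu : T → T
  | none => none
  | some (a, _) => some (a, true)

end T

namespace T

/-- The model value in the half line `[0,∞)`: `-∞ ↦ 0`, an element of value `a ↦ exp a`. -/
noncomputable def gval : T → ℝ
  | none => 0
  | some (a, _) => Real.exp a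

lemma nu_isGhost : ∀ x : T, isGhost (nu x)
  | none => trivial
  | some (_, _) => rfl

lemma gval_injOn_tang : Set.InjOn gval {x : T | isTangible x} := by
  rintro (_ | ⟨a, s⟩) hx (_ | ⟨b, t⟩) hy h <;>
    simp only [gval, Set.mem_setOf_eq, isTangible] at hx hy h
  · rfl
  · exact absurd h.symm (Real.exp_pos b).ne'
  · exact absurd h (Real.exp_pos a).ne'
  · rw [Real.exp_eq_exp] at h; subst hx; subst hy; subst h; rfl

lemma gval_injOn_ghost : Set.InjOn gval {x : T | isGhost x} := by
  rintro (_ | ⟨a, s⟩) hx (_ | ⟨b, t⟩) hy h <;>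
    simp only [gval, Set.mem_setOf_eq, isGhost] at hx hy h
  · rfl
  · exact absurd h.symm (Real.exp_pos b).ne'
  · exact absurd h (Real.exp_pos a).ne'
  · rw [Real.exp_eq_exp] at h; subst hx; subst hy; subst h; rfl

lemma gval_image_tang : gval '' {x : T | isTangible x} = Set.Ici 0 := by
  ext y
  constructor
  · rintro ⟨(_ | ⟨a, s⟩), hx, rfl⟩
    · exact Set.self_mem_Ici
    · exact le_of_lt (by simpa [gval] using Real.exp_pos a)
  · intro hy
    rcases eq_or_lt_of_le (Set.mem_Ici.mp hy : (0 : ℝ) ≤ y) with h | h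
    · exact ⟨none, trivial, h⟩
    · exact ⟨some (Real.log y, false), rfl, by simp [gval, Real.exp_log h]⟩

lemma gval_image_ghost : gval '' {x : T | isGhost x} = Set.Ici 0 := by
  ext y
  constructor
  · rintro ⟨(_ | ⟨a, s⟩), hx, rfl⟩
    · exact Set.self_mem_Ici
    · exact le_of_lt (by simpa [gval] using Real.exp_pos a)
  · intro hy
    rcases eq_or_lt_of_le (Set.mem_Ici.mp hy : (0 : ℝ) ≤ y) with h | h
    · exact ⟨none, trivial, h⟩
    · exact ⟨some (Real.log y, true), rfl, by simp [gval, Real.exp_log h]⟩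

/-- The closed sets of the topology on `𝕋`: both the tangible and the ghost layers are
closed in the model `[0,∞)` of `𝕌̄`, and the ghost image of the tangible layer is
contained in the set. -/
def TIsClosed (W : Set T) : Prop :=
  IsClosed (gval '' (W ∩ {x | isTangible x})) ∧
  IsClosed (gval '' (W ∩ {x | isGhost x})) ∧
  nu '' (W ∩ {x | isTangible x}) ⊆ W ∩ {x | isGhost x}

/-- The topology on `𝕋`. -/
noncomputable instance : TopologicalSpace T :=
  TopologicalSpace.ofClosed {W | TIsClosed W}
    (by
      refine ⟨?_, ?_, ?_⟩ <;> simp [TIsClosed])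
    (fun A hA => by
      rcases A.eq_empty_or_nonempty with rfl | hne
      · rw [Set.sInter_empty]
        refine ⟨?_, ?_, ?_⟩
        · rw [Set.univ_inter, gval_image_tang]; exact isClosed_Ici
        · rw [Set.univ_inter, gval_image_ghost]; exact isClosed_Ici
        · rintro y ⟨x, ⟨-, _⟩, rfl⟩
          exact ⟨trivial, nu_isGhost x⟩
      · have : Nonempty A := hne.to_subtype
        have h1 : (⋂₀ A) ∩ {x : T | isTangible x}
            = ⋂ (W : A), ((W : Set T) ∩ {x | isTangible x}) := by
          ext x
          simp only [Set.mem_inter_iff, Set.mem_sInter, Set.mem_iInter, Set.mem_setOf_eq]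
          constructor
          · rintro ⟨h, ht⟩ W; exact ⟨h W W.2, ht⟩
          · intro h
            obtain ⟨W, hW⟩ := hne
            exact ⟨fun V hV => (h ⟨V, hV⟩).1, (h ⟨W, hW⟩).2⟩
        have h2 : (⋂₀ A) ∩ {x : T | isGhost x}
            = ⋂ (W : A), ((W : Set T) ∩ {x | isGhost x}) := by
          ext x
          simp only [Set.mem_inter_iff, Set.mem_sInter, Set.mem_iInter, Set.mem_setOf_eq]
          constructor
          · rintro ⟨h, ht⟩ W; exact ⟨h W W.2, ht⟩
          · intro h
            obtain ⟨W, hW⟩ := hne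
            exact ⟨fun V hV => (h ⟨V, hV⟩).1, (h ⟨W, hW⟩).2⟩
        refine ⟨?_, ?_, ?_⟩
        · rw [h1, Set.InjOn.image_iInter_eq
            (gval_injOn_tang.mono (Set.iUnion_subset fun W => Set.inter_subset_right))]
          exact isClosed_iInter fun W => (hA W.2).1
        · rw [h2, Set.InjOn.image_iInter_eq
            (gval_injOn_ghost.mono (Set.iUnion_subset fun W => Set.inter_subset_right))]
          exact isClosed_iInter fun W => (hA W.2).2.1
        · rintro y ⟨x, ⟨hx, hxt⟩, rfl⟩
          refine ⟨fun W hW => ((hA hW).2.2 ⟨x, ⟨hx W hW, hxt⟩, rfl⟩).1, nu_isGhost x⟩)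
    (fun A hA B hB => by
      have h1 : (A ∪ B) ∩ {x : T | isTangible x}
          = (A ∩ {x | isTangible x}) ∪ (B ∩ {x | isTangible x}) :=
        Set.union_inter_distrib_right A B _
      have h2 : (A ∪ B) ∩ {x : T | isGhost x}
          = (A ∩ {x | isGhost x}) ∪ (B ∩ {x | isGhost x}) :=
        Set.union_inter_distrib_right A B _
      refine ⟨?_, ?_, ?_⟩
      · rw [h1, Set.image_union]; exact hA.1.union hB.1
      · rw [h2, Set.image_union]; exact hA.2.1.union hB.2.1
      · rintro y ⟨x, ⟨hx, hxt⟩, rfl⟩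
        rcases hx with hxA | hxB
        · have h := hA.2.2 ⟨x, ⟨hxA, hxt⟩, rfl⟩
          exact ⟨Or.inl h.1, h.2⟩
        · have h := hB.2.2 ⟨x, ⟨hxB, hxt⟩, rfl⟩
          exact ⟨Or.inr h.1, h.2⟩)

end T

namespace T

lemma zero_def' : (0 : T) = none := rfl

lemma mul_some (a b : ℝ) (s t : Bool) :
    HMul.hMul (α := T) (β := T) (γ := T) (some (a, s)) (some (b, t)) = some (a + b, s || t) := rfl

lemma add_some (a b : ℝ) (s t : Bool) :
    HAdd.hAdd (α := T) (β := T) (γ := T) (some (a, s)) (some (b, t)) =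
      if a < b then some (b, t) else if b < a then some (a, s) else some (a, true) := rfl

lemma none_add (y : T) : HAdd.hAdd (α := T) (β := T) (γ := T) none y = y := by cases y <;> rfl

lemma add_none (x : T) : HAdd.hAdd (α := T) (β := T) (γ := T) x none = x := by cases x <;> rfl

lemma isGhost_add {x y : T} (hx : isGhost x) (hy : isGhost y) : isGhost (x + y) := by
  rcases x with _ | ⟨a, s⟩ <;> rcases y with _ | ⟨b, t⟩
  · exact trivial
  · exact hy
  · exact hx
  · simp only [isGhost] at hx hy
    rw [add_some]
    split_ifs <;> simp [isGhost, hx, hy]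

/-- `x` is a ghost of value at least `r`. -/
def Dom (r : ℝ) (x : T) : Prop := ∃ a : ℝ, r ≤ a ∧ x = some (a, true)

/-- `x` is a ghost, or has value at most `r`. -/
def Rr (r : ℝ) (x : T) : Prop := isGhost x ∨ ∃ (a : ℝ) (b : Bool), x = some (a, b) ∧ a ≤ r

lemma Rr_zero (r : ℝ) : Rr r 0 := Or.inl trivial

lemma Rr_add {r : ℝ} {x y : T} (hx : Rr r x) (hy : Rr r y) : Rr r (x + y) := by
  rcases x with _ | ⟨a, s⟩
  · rw [none_add]; exact hy
  rcases y with _ | ⟨b, t⟩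
  · exact hx
  rw [add_some]
  rcases hx with hx | ⟨a', s', h', ha'⟩
  · simp only [isGhost] at hx; subst hx
    rcases hy with hy | ⟨b', t', h', hb'⟩
    · simp only [isGhost] at hy; subst hy
      split_ifs <;> exact Or.inl rfl
    · injection h' with h''; injection h'' with h1 h2; subst h1; subst h2
      split_ifs
      · exact Or.inr ⟨b, t, rfl, hb'⟩
      · exact Or.inl rfl
      · exact Or.inl rfl
  · injection h' with h''; injection h'' with h1 h2; subst h1; subst h2
    rcases hy with hy | ⟨b', t', h', hb'⟩
    · simp only [isGhost] at hy; subst hy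
      split_ifs
      · exact Or.inl rfl
      · exact Or.inr ⟨a, s, rfl, ha'⟩
      · exact Or.inl rfl
    · injection h' with h''; injection h'' with h1 h2; subst h1; subst h2
      split_ifs
      · exact Or.inr ⟨b, t, rfl, hb'⟩
      · exact Or.inr ⟨a, s, rfl, ha'⟩
      · exact Or.inr ⟨a, true, rfl, ha'⟩

lemma Dom_add {r : ℝ} {x y : T} (hx : Dom r x) (hy : Rr r y) : Dom r (x + y) := by
  obtain ⟨a, hra, rfl⟩ := hx
  rcases y with _ | ⟨b, t⟩
  · exact ⟨a, hra, rfl⟩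
  rw [add_some]
  rcases hy with hy | ⟨b', t', h', hb'⟩
  · simp only [isGhost] at hy; subst hy
    split_ifs with h1 h2
    · exact ⟨b, le_trans hra h1.le, rfl⟩
    · exact ⟨a, hra, rfl⟩
    · exact ⟨a, hra, rfl⟩
  · injection h' with h''; injection h'' with h1 h2; subst h1; subst h2
    split_ifs with h1 h2
    · exact absurd h1 (not_lt.mpr (hb'.trans hra))
    · exact ⟨a, hra, rfl⟩
    · exact ⟨a, hra, rfl⟩

lemma Dom_isGhost {r : ℝ} {x : T} (hx : Dom r x) : isGhost x := by
  obtain ⟨a, -, rfl⟩ := hx; rfl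

lemma Rr_sum {r : ℝ} {ι : Type*} (s : Finset ι) (g : ι → T)
    (h : ∀ i ∈ s, Rr r (g i)) : Rr r (∑ i ∈ s, g i) :=
  Finset.sum_induction g (Rr r) (fun _ _ ha hb => Rr_add ha hb) (Rr_zero r) h

lemma ghost_pow (M : ℝ) : ∀ k : ℕ, k ≠ 0 → HPow.hPow (α := T) (β := ℕ) (γ := T) (some (M, true)) k = some ((k : ℝ) * M, true)
  | 0, hk => absurd rfl hk
  | (k + 1), _ => by
    rcases Nat.eq_zero_or_pos k with rfl | hk
    · exact (pow_one (M := T) _).trans (congrArg (fun x => (show T from some (x, true))) (by simp))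
    · refine (pow_succ (M := T) _ k).trans ?_
      refine (congrArg (fun y : T => y * (show T from some (M, true))) (ghost_pow M k hk.ne')).trans ?_
      refine (mul_some _ _ _ _).trans ?_
      have hcast : (((k : ℕ) + 1 : ℕ) : ℝ) * M = (k : ℝ) * M + M := by push_cast; ring
      exact congrArg (fun x => (show T from some (x, true))) hcast.symm

lemma prod_some_true {ι : Type*} (s : Finset ι) (hs : s.Nonempty) (v : ι → ℝ) :
    ∏ i ∈ s, (show T from some (v i, true)) = some (∑ i ∈ s, v i, true) := by
  induction s using Finset.cons_induction with
  | empty => exact absurd hs (by simp)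
  | cons a s ha ih =>
    rw [Finset.prod_cons, Finset.sum_cons]
    rcases s.eq_empty_or_nonempty with rfl | hs'
    · refine (congrArg _ Finset.prod_empty).trans ((mul_one (M := T) _).trans ?_)
      exact congrArg (fun x => (show T from some (x, true))) (by simp)
    · rw [ih hs', mul_some]; rfl

end T

/-- Theorem `thm:commonZero`: finitely many nonconstant polynomials
have a common tropical root. -/
theorem tropical_common_root (n s : ℕ) (f : Fin s → MvPolynomial (Fin n) T)
    (h : ∀ i, ∀ c : T, f i ≠ MvPolynomial.C c) :
    ∃ a : Fin n → T, ∀ i, T.isGhost (MvPolynomial.eval a (f i)) := by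
  classical
  have hsupp : ∀ i, ∃ d ∈ (f i).support, d ≠ 0 := by
    intro i
    by_contra hc
    push_neg at hc
    refine h i (MvPolynomial.coeff 0 (f i)) ?_
    ext m
    rw [MvPolynomial.coeff_C]
    split_ifs with hm
    · rw [← hm]
    · by_cases hms : m ∈ (f i).support
      · exact absurd (hc m hms) (Ne.symm hm)
      · simpa using (MvPolynomial.notMem_support_iff.mp hms)
  choose d₀ hd₀mem hd₀ne using hsupp
  obtain ⟨M₀, hM₀⟩ := Finite.exists_le
    (fun i => T.val (MvPolynomial.coeff 0 (f i)) - T.val (MvPolynomial.coeff (d₀ i) (f i)))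
  set M : ℝ := max M₀ 0 with hM
  have hM0 : 0 ≤ M := le_max_right _ _
  refine ⟨fun _ => (show T from some (M, true)), ?_⟩
  intro i
  have hprodgen : ∀ d : Fin n →₀ ℕ, d.support.Nonempty →
      ∏ j ∈ d.support, (fun _ : Fin n => (show T from some (M, true))) j ^ d j
        = some (∑ j ∈ d.support, (d j : ℝ) * M, true) := by
    intro d hne
    rw [← T.prod_some_true _ hne (fun j => (d j : ℝ) * M)]
    refine Finset.prod_congr rfl fun j hj => ?_
    exact T.ghost_pow M (d j) (Finsupp.mem_support_iff.mp hj)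
  rw [MvPolynomial.eval_eq, ← Finset.add_sum_erase _ _ (hd₀mem i)]
  refine T.Dom_isGhost
    (T.Dom_add (r := T.val (MvPolynomial.coeff 0 (f i))) ?_ (T.Rr_sum _ _ ?_))
  · have hne : (d₀ i).support.Nonempty := Finsupp.support_nonempty_iff.mpr (hd₀ne i)
    obtain ⟨cv, cb, hco⟩ :
        ∃ cv cb, MvPolynomial.coeff (d₀ i) (f i) = some (cv, cb) := by
      rcases hx : MvPolynomial.coeff (d₀ i) (f i) with _ | ⟨cv, cb⟩
      · exact absurd hx (MvPolynomial.mem_support_iff.mp (hd₀mem i))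
      · exact ⟨cv, cb, rfl⟩
    rw [hco, hprodgen _ hne, T.mul_some]
    refine ⟨cv + ∑ j ∈ (d₀ i).support, ((d₀ i) j : ℝ) * M, ?_, by cases cb <;> rfl⟩
    have hdvi : T.val (MvPolynomial.coeff (d₀ i) (f i)) = cv := by rw [hco]; rfl
    obtain ⟨j₀, hj₀⟩ := hne
    have h1 : M ≤ ∑ j ∈ (d₀ i).support, ((d₀ i) j : ℝ) * M := by
      calc M = 1 * M := (one_mul M).symm
        _ ≤ ((d₀ i) j₀ : ℝ) * M := by
            refine mul_le_mul_of_nonneg_right ?_ hM0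
            exact_mod_cast Nat.one_le_iff_ne_zero.mpr (Finsupp.mem_support_iff.mp hj₀)
        _ ≤ ∑ j ∈ (d₀ i).support, ((d₀ i) j : ℝ) * M :=
            Finset.single_le_sum (f := fun j => ((d₀ i) j : ℝ) * M)
              (fun j _ => mul_nonneg (Nat.cast_nonneg _) hM0) hj₀
    have h2 : T.val (MvPolynomial.coeff 0 (f i))
        - T.val (MvPolynomial.coeff (d₀ i) (f i)) ≤ M := le_trans (hM₀ i) (le_max_left _ _)
    rw [hdvi] at h2
    linarith
  · intro d hd
    have hdmem : d ∈ (f i).support := Finset.mem_of_mem_erase hd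
    rcases eq_or_ne d 0 with rfl | hdne0
    · rw [Finsupp.support_zero, Finset.prod_empty, mul_one]
      rcases hx : MvPolynomial.coeff 0 (f i) with _ | ⟨a, b⟩
      · exact Or.inl trivial
      · exact Or.inr ⟨a, b, rfl, le_of_eq rfl⟩
    · have hne : d.support.Nonempty := Finsupp.support_nonempty_iff.mpr hdne0
      obtain ⟨cv, cb, hco⟩ :
          ∃ cv cb, MvPolynomial.coeff d (f i) = some (cv, cb) := by
        rcases hx : MvPolynomial.coeff d (f i) with _ | ⟨cv, cb⟩
        · exact absurd hx (MvPolynomial.mem_support_iff.mp hdmem)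
        · exact ⟨cv, cb, rfl⟩
      rw [hco, hprodgen d hne, T.mul_some]
      exact Or.inl (by simp [T.isGhost])
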